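/- Let (a,b) ⊆ ℝ be a bounded interval and p ≥ 1. Define ψ₁(x) := 1 and ψ₂(x) := [(x-a)(b-x)]^{-1/p} for x ∈ (a,b). Then ‖ψ₁‖_{p,w,(a,b)} = (b-a)^{1/p} and ‖ψ₂‖_{p,w,(a,b)} ≤ (4/(b-a))^{1/p}. -/

import Mathlib

open MeasureTheory Set
open scoped ENNReal NNReal

/-- The weak `L^p` quasinorm of `ψ` over `Ω ⊆ ℝ`:
`sup_{M ≥ 0} M · (meas {x ∈ Ω : |ψ(x)| > M})^(1/p)`. -/
noncomputable def weakLpNorm (p : ℝ) (Ω : Set ℝ) (ψ : ℝ → ℝ) : ℝ≥0∞ :=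
  ⨆ M : ℝ≥0, (M : ℝ≥0∞) * (volume {x | x ∈ Ω ∧ (M : ℝ) < |ψ x|}) ^ (1 / p)

/-- **Weak `L^p` quasinorms of two model functions.**
On a bounded interval `(a,b)` with `p ≥ 1`, the constant function `ψ₁ = 1` has
`‖ψ₁‖_{p,w,(a,b)} = (b-a)^(1/p)`, and `ψ₂(x) = ((x-a)(b-x))^(-1/p)` satisfies
`‖ψ₂‖_{p,w,(a,b)} ≤ (4/(b-a))^(1/p)`. -/
theorem weak_lp_model_functions (a b : ℝ) (hab : a < b) (p : ℝ) (hp : 1 ≤ p) :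
    weakLpNorm p (Ioo a b) (fun _ => (1 : ℝ)) = ENNReal.ofReal ((b - a) ^ (1 / p)) ∧
    weakLpNorm p (Ioo a b) (fun x => ((x - a) * (b - x)) ^ (-(1 / p))) ≤
      ENNReal.ofReal ((4 / (b - a)) ^ (1 / p)) := by
  have hp0 : (0:ℝ) < p := lt_of_lt_of_le one_pos hp
  have hp0' : p ≠ 0 := ne_of_gt hp0
  have hinvp : (0:ℝ) < 1 / p := by positivity
  have hba : (0:ℝ) < b - a := sub_pos.2 hab
  constructor
  · -- Part 1
    set C : ℝ≥0∞ := ENNReal.ofReal ((b - a) ^ (1 / p)) with hC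
    have hCpos : 0 < C := by
      rw [hC]
      exact ENNReal.ofReal_pos.2 (Real.rpow_pos_of_pos hba _)
    have hCne : C ≠ 0 := ne_of_gt hCpos
    have hCtop : C ≠ ∞ := ENNReal.ofReal_ne_top
    have hterm : ∀ M : ℝ≥0,
        (M : ℝ≥0∞) * (volume {x | x ∈ Ioo a b ∧ (M : ℝ) < |(1:ℝ)|}) ^ (1 / p)
          = if (M : ℝ) < 1 then (M : ℝ≥0∞) * C else 0 := by
      intro M
      by_cases h : (M : ℝ) < 1
      · have hset : {x | x ∈ Ioo a b ∧ (M : ℝ) < |(1:ℝ)|} = Ioo a b := by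
          ext x; simp [abs_one, h]
        rw [hset, if_pos h, Real.volume_Ioo, hC,
          ENNReal.ofReal_rpow_of_pos hba]
      · have hset : {x | x ∈ Ioo a b ∧ (M : ℝ) < |(1:ℝ)|} = (∅ : Set ℝ) := by
          ext x; simp [abs_one, h]
        rw [hset, if_neg h]
        simp [ENNReal.zero_rpow_of_pos hinvp]
        exact Or.inr hp0
    unfold weakLpNorm
    apply le_antisymm
    · apply iSup_le
      intro M
      rw [hterm M]
      by_cases h : (M : ℝ) < 1
      · rw [if_pos h]
        calc (M : ℝ≥0∞) * C ≤ 1 * C := by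
              gcongr
              exact_mod_cast le_of_lt h
          _ = C := one_mul C
      · rw [if_neg h]; exact zero_le'
    · apply le_of_forall_lt
      intro x hx
      have hxC : x / C < 1 := by
        rw [ENNReal.div_lt_iff (Or.inl hCne) (Or.inl hCtop), one_mul]
        exact hx
      obtain ⟨y, hy1, hy2⟩ := exists_between hxC
      have hytop : y ≠ ∞ := ne_top_of_lt (lt_trans hy2 ENNReal.one_lt_top)
      set M : ℝ≥0 := y.toNNReal with hM
      have hMy : (M : ℝ≥0∞) = y := ENNReal.coe_toNNReal hytop
      have hM1 : (M : ℝ) < 1 := by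
        have : (M : ℝ≥0∞) < 1 := hMy ▸ hy2
        exact_mod_cast this
      calc x = x / C * C := (ENNReal.div_mul_cancel hCne hCtop).symm
        _ < (M : ℝ≥0∞) * C := by
            apply ENNReal.mul_lt_mul_left hCne hCtop
            rw [hMy]; exact hy1
        _ = (M : ℝ≥0∞) * (volume {x | x ∈ Ioo a b ∧ (M : ℝ) < |(1:ℝ)|}) ^ (1 / p) := by
            rw [hterm M, if_pos hM1]
        _ ≤ _ := le_iSup (fun M : ℝ≥0 =>
            (M : ℝ≥0∞) * (volume {x | x ∈ Ioo a b ∧ (M : ℝ) < |(1:ℝ)|}) ^ (1 / p)) M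
  · -- Part 2
    unfold weakLpNorm
    apply iSup_le
    intro M
    rcases eq_or_ne M 0 with hM | hM
    · simp [hM]
    have hMpos : (0:ℝ) < (M : ℝ) := by exact_mod_cast pos_iff_ne_zero.mpr hM
    set c : ℝ := (M : ℝ) ^ (-p) with hc
    have hcpos : 0 < c := Real.rpow_pos_of_pos hMpos _
    set d : ℝ := 2 * c / (b - a) with hd
    have hdpos : 0 < d := by positivity
    -- set inclusion
    have hsub : {x | x ∈ Ioo a b ∧ (M : ℝ) < |((x - a) * (b - x)) ^ (-(1 / p))|}
        ⊆ Ioo a (a + d) ∪ Ioo (b - d) b := by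
      rintro x ⟨⟨hax, hxb⟩, hMx⟩
      have hxa : 0 < x - a := sub_pos.2 hax
      have hbx : 0 < b - x := sub_pos.2 hxb
      have ht : 0 < (x - a) * (b - x) := mul_pos hxa hbx
      have habs : |((x - a) * (b - x)) ^ (-(1 / p))| = ((x - a) * (b - x)) ^ (-(1 / p)) :=
        abs_of_pos (Real.rpow_pos_of_pos ht _)
      rw [habs] at hMx
      have hkey : (x - a) * (b - x) < c := by
        have h1 : (((x - a) * (b - x)) ^ (-(1 / p))) ^ (-p) < (M : ℝ) ^ (-p) :=
          Real.rpow_lt_rpow_of_neg hMpos hMx (by linarith)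
        have h2 : (((x - a) * (b - x)) ^ (-(1 / p))) ^ (-p)
            = ((x - a) * (b - x)) ^ ((-(1 / p)) * (-p)) :=
          (Real.rpow_mul ht.le _ _).symm
        have h3 : (-(1 / p)) * (-p) = 1 := by field_simp
        rw [h2, h3, Real.rpow_one] at h1
        exact h1
      by_cases hx2 : x ≤ (a + b) / 2
      · left
        have hbig : (x - a) * ((b - a) / 2) ≤ (x - a) * (b - x) := by
          apply mul_le_mul_of_nonneg_left _ hxa.le
          linarith
        have hdb : d * (b - a) = 2 * c := by
          rw [hd]; field_simp
        constructor
        · exact hax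
        · nlinarith
      · right
        have hbig : ((b - a) / 2) * (b - x) ≤ (x - a) * (b - x) := by
          apply mul_le_mul_of_nonneg_right _ hbx.le
          linarith
        have hdb : d * (b - a) = 2 * c := by
          rw [hd]; field_simp
        constructor
        · nlinarith
        · exact hxb
    have hvol : volume {x | x ∈ Ioo a b ∧ (M : ℝ) < |((x - a) * (b - x)) ^ (-(1 / p))|}
        ≤ ENNReal.ofReal (2 * d) := by
      calc volume {x | x ∈ Ioo a b ∧ (M : ℝ) < |((x - a) * (b - x)) ^ (-(1 / p))|}
          ≤ volume (Ioo a (a + d) ∪ Ioo (b - d) b) := measure_mono hsub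
        _ ≤ volume (Ioo a (a + d)) + volume (Ioo (b - d) b) := measure_union_le _ _
        _ = ENNReal.ofReal d + ENNReal.ofReal d := by
            rw [Real.volume_Ioo, Real.volume_Ioo]
            norm_num
        _ = ENNReal.ofReal (2 * d) := by
            rw [two_mul, ENNReal.ofReal_add hdpos.le hdpos.le]
    calc (M : ℝ≥0∞) * (volume {x | x ∈ Ioo a b ∧ (M : ℝ) < |((x - a) * (b - x)) ^ (-(1 / p))|}) ^ (1 / p)
        ≤ (M : ℝ≥0∞) * (ENNReal.ofReal (2 * d)) ^ (1 / p) := by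
          gcongr
      _ = ENNReal.ofReal ((M : ℝ) * (2 * d) ^ (1 / p)) := by
          rw [ENNReal.ofReal_rpow_of_pos (by positivity),
            ENNReal.ofReal_mul hMpos.le, ENNReal.ofReal_coe_nnreal]
      _ = ENNReal.ofReal ((4 / (b - a)) ^ (1 / p)) := by
          congr 1
          have h2d : 2 * d = (4 / (b - a)) * c := by
            rw [hd]; ring
          rw [h2d, Real.mul_rpow (by positivity) hcpos.le, hc,
            ← Real.rpow_mul hMpos.le]
          have hexp : -p * (1 / p) = -1 := by field_simp
          rw [hexp, Real.rpow_neg_one]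
          field_simp
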